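/- Up to translation and rotation (but not reflection), there are exactly 7 connected configurations of 4 cells in the 2D square grid (the one-sided tetrominoes). -/

import Mathlib

/-- Side-adjacency: ℓ¹ distance 1. -/
def SideAdj (p q : ℤ × ℤ) : Prop := |p.1 - q.1| + |p.2 - q.2| = 1

/-- A finite set of cells is connected under side-adjacency. -/
def ConnectedConfig (S : Finset (ℤ × ℤ)) : Prop :=
  ∀ a ∈ S, ∀ b ∈ S, Relation.ReflTransGen (fun x y => x ∈ S ∧ y ∈ S ∧ SideAdj x y) a b

/-- Rotation by π/2 (counter-clockwise) about the origin on the grid. -/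
def Rot90 (p : ℤ × ℤ) : ℤ × ℤ := (-p.2, p.1)

/-- `S` and `T` are equivalent up to a rotation by a multiple of π/2 composed with a
translation (no reflections). -/
def RotTransEquiv (S T : Finset (ℤ × ℤ)) : Prop :=
  ∃ (k : ℕ) (v : ℤ × ℤ), T = S.image (fun p => Rot90^[k] p + v)

/-! ### Auxiliary material -/

lemma sideAdj_iff (p q : ℤ × ℤ) : SideAdj p q ↔
    (p.1 = q.1 ∧ (p.2 = q.2 + 1 ∨ q.2 = p.2 + 1)) ∨
    (p.2 = q.2 ∧ (p.1 = q.1 + 1 ∨ q.1 = p.1 + 1)) := by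
  unfold SideAdj
  rcases abs_cases (p.1 - q.1) with ⟨h1, h1'⟩ | ⟨h1, h1'⟩ <;>
    rcases abs_cases (p.2 - q.2) with ⟨h2, h2'⟩ | ⟨h2, h2'⟩ <;> omega

instance : DecidableRel SideAdj := fun p q => decidable_of_iff' _ (sideAdj_iff p q)

/-- One BFS step inside `S`. -/
def cstep (S A : Finset (ℤ × ℤ)) : Finset (ℤ × ℤ) :=
  A ∪ S.filter (fun q => ∃ p ∈ A, SideAdj p q)

/-- Iterated BFS. -/
def reachN (S : Finset (ℤ × ℤ)) (n : ℕ) (A : Finset (ℤ × ℤ)) : Finset (ℤ × ℤ) :=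
  (cstep S)^[n] A

/-- The relation used in `ConnectedConfig`. -/
def crel (S : Finset (ℤ × ℤ)) : (ℤ × ℤ) → (ℤ × ℤ) → Prop :=
  fun x y => x ∈ S ∧ y ∈ S ∧ SideAdj x y

lemma subset_cstep (S A : Finset (ℤ × ℤ)) : A ⊆ cstep S A :=
  Finset.subset_union_left

lemma cstep_subset {S A : Finset (ℤ × ℤ)} (hA : A ⊆ S) : cstep S A ⊆ S :=
  Finset.union_subset hA (Finset.filter_subset _ _)

lemma reachN_subset {S A : Finset (ℤ × ℤ)} (hA : A ⊆ S) (n : ℕ) : reachN S n A ⊆ S := by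
  induction n with
  | zero => exact hA
  | succ n ih =>
      unfold reachN at *
      rw [Function.iterate_succ_apply']
      exact cstep_subset ih

lemma reachN_mono_succ (S A : Finset (ℤ × ℤ)) (n : ℕ) :
    reachN S n A ⊆ reachN S (n + 1) A := by
  unfold reachN
  rw [Function.iterate_succ_apply']
  exact subset_cstep _ _

lemma reachN_mono (S A : Finset (ℤ × ℤ)) {m n : ℕ} (h : m ≤ n) :
    reachN S m A ⊆ reachN S n A := by
  induction n with
  | zero => simpa [Nat.le_zero.mp h]
  | succ n ih =>
      rcases Nat.lt_or_ge m (n + 1) with h' | h'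
      · exact (ih (Nat.lt_succ_iff.mp h')).trans (reachN_mono_succ S A n)
      · have : m = n + 1 := le_antisymm h h'
        subst this; exact subset_rfl

/-- Soundness: everything reached is connected to the start. -/
lemma reach_sound {S : Finset (ℤ × ℤ)} {a : ℤ × ℤ} (ha : a ∈ S) :
    ∀ n, ∀ b ∈ reachN S n {a}, Relation.ReflTransGen (crel S) a b := by
  intro n
  induction n with
  | zero =>
      intro b hb
      rw [reachN, Function.iterate_zero_apply, Finset.mem_singleton] at hb
      subst hb; exact Relation.ReflTransGen.refl
  | succ n ih =>
      intro b hb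
      rw [reachN, Function.iterate_succ_apply'] at hb
      rcases Finset.mem_union.mp hb with h | h
      · exact ih b h
      · rcases Finset.mem_filter.mp h with ⟨hbS, p, hp, hadj⟩
        have hpS : p ∈ S := reachN_subset (Finset.singleton_subset_iff.mpr ha) n hp
        exact (ih p hp).tail ⟨hpS, hbS, hadj⟩

lemma rtg_mem_reach {S : Finset (ℤ × ℤ)} {a b : ℤ × ℤ}
    (h : Relation.ReflTransGen (crel S) a b) : ∃ n, b ∈ reachN S n {a} := by
  induction h with
  | refl => exact ⟨0, Finset.mem_singleton_self a⟩
  | tail hac hcb ih =>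
      obtain ⟨n, hc⟩ := ih
      refine ⟨n + 1, ?_⟩
      rw [reachN, Function.iterate_succ_apply']
      exact Finset.mem_union_right _
        (Finset.mem_filter.mpr ⟨hcb.2.1, _, hc, hcb.2.2⟩)

lemma reach_fixed_from {S A : Finset (ℤ × ℤ)} {m : ℕ}
    (h : cstep S (reachN S m A) = reachN S m A) {n : ℕ} (hmn : m ≤ n) :
    reachN S n A = reachN S m A := by
  have hn : n = (n - m) + m := by omega
  rw [hn]
  unfold reachN at *
  rw [Function.iterate_add_apply]
  exact Function.iterate_fixed h _

/-- With at most 4 cells, 3 BFS steps suffice. -/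
lemma reach_le3 {S : Finset (ℤ × ℤ)} (hS : S.card ≤ 4) {a : ℤ × ℤ} (ha : a ∈ S) :
    ∀ n, reachN S n {a} ⊆ reachN S 3 {a} := by
  have hsub : ({a} : Finset (ℤ × ℤ)) ⊆ S := Finset.singleton_subset_iff.mpr ha
  have key : ∀ m : ℕ, cstep S (reachN S m {a}) ≠ reachN S m {a} →
      (reachN S m {a}).card < (reachN S (m+1) {a}).card := by
    intro m hm
    have h1 : reachN S m {a} ⊂ reachN S (m+1) {a} := by
      refine HasSubset.Subset.ssubset_of_ne (reachN_mono_succ S {a} m) ?_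
      intro h
      apply hm
      have : reachN S (m+1) {a} = cstep S (reachN S m {a}) := by
        unfold reachN; rw [Function.iterate_succ_apply']
      rw [← this, ← h]
    exact Finset.card_lt_card h1
  have hstab : cstep S (reachN S 3 {a}) = reachN S 3 {a} := by
    by_cases h0 : cstep S (reachN S 0 {a}) = reachN S 0 {a}
    · rw [reach_fixed_from h0 (by norm_num : 0 ≤ 3)]; exact h0
    · by_cases h1 : cstep S (reachN S 1 {a}) = reachN S 1 {a}
      · rw [reach_fixed_from h1 (by norm_num : 1 ≤ 3)]; exact h1
      · by_cases h2 : cstep S (reachN S 2 {a}) = reachN S 2 {a}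
        · rw [reach_fixed_from h2 (by norm_num : 2 ≤ 3)]; exact h2
        · have c0 : (reachN S 0 {a}).card = 1 := by
            unfold reachN; rw [Function.iterate_zero_apply]; exact Finset.card_singleton a
          have l0 := key 0 h0
          have l1 := key 1 h1
          have l2 := key 2 h2
          norm_num at l0 l1 l2
          have hns : reachN S 3 {a} ⊆ S := reachN_subset hsub 3
          have h4 : S.card ≤ (reachN S 3 {a}).card := by
            have := Finset.card_le_card hns
            omega
          have hSeq : reachN S 3 {a} = S := Finset.eq_of_subset_of_card_le hns h4
          rw [hSeq]
          unfold cstep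
          exact Finset.union_eq_left.mpr (Finset.filter_subset _ _)
  intro n
  rcases Nat.lt_or_ge n 3 with h | h
  · exact reachN_mono S {a} (le_of_lt h)
  · rw [reach_fixed_from hstab h]

/-! ### Rotation lemmas -/

lemma rot4 (p : ℤ × ℤ) : Rot90^[4] p = p := by
  show Rot90 (Rot90 (Rot90 (Rot90 p))) = p
  simp [Rot90]

lemma rot_mod (k : ℕ) (p : ℤ × ℤ) : Rot90^[k] p = Rot90^[k % 4] p := by
  conv_lhs => rw [← Nat.div_add_mod k 4]
  rw [Function.iterate_add_apply, Function.iterate_mul]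
  rw [show Rot90^[4] = id from funext rot4, Function.iterate_id]
  rfl

lemma rot_add (p q : ℤ × ℤ) : Rot90 (p + q) = Rot90 p + Rot90 q := by
  unfold Rot90
  apply Prod.ext <;> simp <;> ring

lemma rotk_add (k : ℕ) (p q : ℤ × ℤ) :
    Rot90^[k] (p + q) = Rot90^[k] p + Rot90^[k] q := by
  induction k with
  | zero => rfl
  | succ k ih =>
      rw [Function.iterate_succ_apply', Function.iterate_succ_apply',
        Function.iterate_succ_apply', ih, rot_add]

lemma equiv_symm {S T : Finset (ℤ × ℤ)} (h : RotTransEquiv S T) : RotTransEquiv T S := by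
  obtain ⟨k, v, rfl⟩ := h
  refine ⟨4 - k % 4, -(Rot90^[4 - k % 4] v), ?_⟩
  rw [Finset.image_image]
  have hpt : ∀ p : ℤ × ℤ,
      Rot90^[4 - k % 4] (Rot90^[k] p + v) + -(Rot90^[4 - k % 4] v) = p := by
    intro p
    rw [rotk_add]
    have h1 : Rot90^[4 - k % 4] (Rot90^[k] p) = p := by
      rw [← Function.iterate_add_apply, rot_mod]
      have : (4 - k % 4 + k) % 4 = 0 := by omega
      rw [this]
      rfl
    rw [h1]
    abel
  exact ((Finset.image_congr (g := id) (fun p _ => hpt p)).trans Finset.image_id).symm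

/-! ### Geometric bounds -/

lemma ivt {f : ℤ × ℤ → ℤ} (hf : ∀ x y : ℤ × ℤ, SideAdj x y → f y ≤ f x + 1)
    {S : Finset (ℤ × ℤ)} {a b : ℤ × ℤ} (ha : a ∈ S)
    (h : Relation.ReflTransGen (crel S) a b) :
    ∀ t, f a ≤ t → t ≤ f b → ∃ p ∈ S, f p = t := by
  induction h with
  | refl => exact fun t h1 h2 => ⟨a, ha, le_antisymm h1 h2⟩
  | @tail c b hac hcb ih =>
      intro t h1 h2
      by_cases hc : t ≤ f c
      · exact ih t h1 hc
      · have hb1 : f b ≤ f c + 1 := hf c b hcb.2.2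
        have : f b = t := by omega
        exact ⟨b, hcb.2.1, this⟩

lemma span {f : ℤ × ℤ → ℤ} (hf : ∀ x y : ℤ × ℤ, SideAdj x y → f y ≤ f x + 1)
    {S : Finset (ℤ × ℤ)} (hcard : S.card = 4) (hconn : ConnectedConfig S)
    {a b : ℤ × ℤ} (ha : a ∈ S) (hb : b ∈ S) : f b - f a ≤ 3 := by
  rcases le_or_gt (f b) (f a) with h | h
  · omega
  · have hsub : Finset.Icc (f a) (f b) ⊆ S.image f := by
      intro t ht
      rw [Finset.mem_Icc] at ht
      obtain ⟨p, hp, hpt⟩ := ivt hf ha (hconn a ha b hb) t ht.1 ht.2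
      exact Finset.mem_image.mpr ⟨p, hp, hpt⟩
    have h1 : (Finset.Icc (f a) (f b)).card ≤ (S.image f).card :=
      Finset.card_le_card hsub
    have h2 : (S.image f).card ≤ 4 := hcard ▸ Finset.card_image_le
    rw [Int.card_Icc] at h1
    omega

lemma fst_adj : ∀ x y : ℤ × ℤ, SideAdj x y → y.1 ≤ x.1 + 1 := by
  intro x y h
  rcases (sideAdj_iff x y).mp h with ⟨h1, h2⟩ | ⟨h1, h2⟩ <;> omega

lemma snd_adj : ∀ x y : ℤ × ℤ, SideAdj x y → y.2 ≤ x.2 + 1 := by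
  intro x y h
  rcases (sideAdj_iff x y).mp h with ⟨h1, h2⟩ | ⟨h1, h2⟩ <;> omega

/-- Translation preserves connectivity. -/
lemma conn_translate {S : Finset (ℤ × ℤ)} (v : ℤ × ℤ) (h : ConnectedConfig S) :
    ConnectedConfig (S.image (· + v)) := by
  intro a ha b hb
  rw [Finset.mem_image] at ha hb
  obtain ⟨a', ha', rfl⟩ := ha
  obtain ⟨b', hb', rfl⟩ := hb
  refine Relation.ReflTransGen.lift (fun p => p + v) ?_ _ _ (h a' ha' b' hb')
  rintro x y ⟨hx, hy, hadj⟩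
  simp only [Function.onFun]
  refine ⟨Finset.mem_image_of_mem _ hx, Finset.mem_image_of_mem _ hy, ?_⟩
  rw [sideAdj_iff] at hadj ⊢
  simp only [Prod.fst_add, Prod.snd_add]
  omega

/-- Each cell of a connected configuration with ≥ 2 cells has a neighbour. -/
lemma exists_neighbor {S : Finset (ℤ × ℤ)} (hcard : 2 ≤ S.card)
    (hconn : ConnectedConfig S) : ∀ p ∈ S, ∃ q ∈ S, SideAdj p q := by
  intro p hp
  obtain ⟨b, hb, hbp⟩ := Finset.exists_mem_ne (s := S) (by omega) p
  rcases (hconn p hp b hb).cases_head with h | ⟨c, hc, -⟩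
  · exact absurd h.symm hbp
  · exact ⟨c, hc.2.1, hc.2.2⟩

/-! ### The finite check -/

def box : Finset (ℤ × ℤ) :=
  { (0,0),(1,0),(2,0),(3,0),
    (0,1),(1,1),(2,1),(3,1),
    (0,2),(1,2),(2,2),(3,2),
    (0,3),(1,3),(2,3),(3,3) }

lemma mem_box {p : ℤ × ℤ} (h1 : 0 ≤ p.1) (h2 : p.1 ≤ 3) (h3 : 0 ≤ p.2) (h4 : p.2 ≤ 3) :
    p ∈ box := by
  obtain ⟨x, y⟩ := p
  simp only at h1 h2 h3 h4
  interval_cases x <;> interval_cases y <;> decide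

def normz (A : Finset (ℤ × ℤ)) : Finset (ℤ × ℤ) :=
  A.image (fun p => p + (-((A.image Prod.fst).min.untopD 0), -((A.image Prod.snd).min.untopD 0)))

def R7 : Finset (Finset (ℤ × ℤ)) :=
  { {(0,0),(1,0),(2,0),(3,0)},
    {(0,0),(1,0),(0,1),(1,1)},
    {(0,0),(1,0),(2,0),(1,1)},
    {(1,0),(2,0),(0,1),(1,1)},
    {(0,0),(1,0),(1,1),(2,1)},
    {(0,0),(1,0),(2,0),(0,1)},
    {(0,0),(1,0),(2,0),(2,1)} }

def key (p : ℤ × ℤ) : ℤ := p.1 + 4 * p.2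

lemma box_bounds : ∀ p ∈ box, 0 ≤ p.1 ∧ p.1 ≤ 3 ∧ 0 ≤ p.2 ∧ p.2 ≤ 3 := by decide

lemma key_inj {p q : ℤ × ℤ} (hp : p ∈ box) (hq : q ∈ box) (h : key p = key q) : p = q := by
  have h1 := box_bounds p hp
  have h2 := box_bounds q hq
  unfold key at h
  have h3 : p.1 = q.1 ∧ p.2 = q.2 := by omega
  exact Prod.ext h3.1 h3.2

lemma exists_min_key {A : Finset (ℤ × ℤ)} (hA : A.Nonempty) (hbox : A ⊆ box) :
    ∃ p ∈ A, ∀ q ∈ A, q ≠ p → key p < key q := by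
  obtain ⟨p, hp, hpk⟩ := Finset.mem_image.mp ((A.image key).min'_mem (hA.image _))
  refine ⟨p, hp, fun q hq hne => ?_⟩
  have h1 : (A.image key).min' (hA.image _) ≤ key q :=
    Finset.min'_le _ _ (Finset.mem_image_of_mem _ hq)
  have h2 : key q ≠ key p := fun h => hne (key_inj (hbox hq) (hbox hp) h)
  omega

set_option maxRecDepth 2000 in
set_option maxHeartbeats 8000000 in
lemma complete_check : ∀ p1 ∈ box, ∀ p2 ∈ box, key p1 < key p2 →
    ∀ p3 ∈ box, key p2 < key p3 → ∀ p4 ∈ box, key p3 < key p4 →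
    (∃ p ∈ ({p1, p2, p3, p4} : Finset (ℤ × ℤ)), p.1 = 0) →
    (∃ p ∈ ({p1, p2, p3, p4} : Finset (ℤ × ℤ)), p.2 = 0) →
    (∀ p ∈ ({p1, p2, p3, p4} : Finset (ℤ × ℤ)),
      ∃ q ∈ ({p1, p2, p3, p4} : Finset (ℤ × ℤ)), SideAdj p q) →
    (∀ a ∈ ({p1, p2, p3, p4} : Finset (ℤ × ℤ)), ∀ b ∈ ({p1, p2, p3, p4} : Finset (ℤ × ℤ)),
      b ∈ reachN {p1, p2, p3, p4} 3 {a}) →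
    ∃ k ∈ Finset.range 4,
      normz (({p1, p2, p3, p4} : Finset (ℤ × ℤ)).image (Rot90^[k])) ∈ R7 := by
  decide

set_option maxRecDepth 2000 in
set_option maxHeartbeats 4000000 in
lemma distinct_check : ∀ S ∈ R7, ∀ T ∈ R7, S ≠ T →
    ∀ k ∈ Finset.range 4, ∀ t ∈ T, ∀ s ∈ S,
      T ≠ S.image (fun p => Rot90^[k] p + (t - Rot90^[k] s)) := by decide

lemma R7_card : R7.card = 7 := by decide

lemma R7_card4 : ∀ S ∈ R7, S.card = 4 := by decide

lemma R7_connB : ∀ S ∈ R7, ∀ a ∈ S, ∀ b ∈ S, b ∈ reachN S 3 {a} := by decide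

/-- From a rot-trans equivalence with nonempty source, a bounded witness. -/
lemma equiv_witness {S T : Finset (ℤ × ℤ)} (hS : S.Nonempty) (h : RotTransEquiv S T) :
    ∃ k ∈ Finset.range 4, ∃ t ∈ T, ∃ s ∈ S,
      T = S.image (fun p => Rot90^[k] p + (t - Rot90^[k] s)) := by
  obtain ⟨k, v, rfl⟩ := h
  obtain ⟨s, hs⟩ := hS
  refine ⟨k % 4, Finset.mem_range.mpr (Nat.mod_lt _ (by norm_num)),
    Rot90^[k] s + v, Finset.mem_image_of_mem _ hs, s, hs, ?_⟩
  apply Finset.image_congr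
  intro p _
  show Rot90^[k] p + v = Rot90^[k % 4] p + (Rot90^[k] s + v - Rot90^[k % 4] s)
  rw [← rot_mod k p, ← rot_mod k s]
  abel

/-- Up to translation and rotation (but not reflection), there are exactly 7 connected
configurations of 4 cells (the one-sided tetrominoes). -/
theorem four_cell_configs_up_to_rotation_translation :
    ∃ R : Finset (Finset (ℤ × ℤ)),
      R.card = 7 ∧
      (∀ S ∈ R, S.card = 4 ∧ ConnectedConfig S) ∧
      (∀ S ∈ R, ∀ T ∈ R, S ≠ T → ¬ RotTransEquiv S T) ∧
      (∀ S : Finset (ℤ × ℤ), S.card = 4 → ConnectedConfig S →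
        ∃ T ∈ R, RotTransEquiv T S) := by
  refine ⟨R7, R7_card, ?_, ?_, ?_⟩
  · intro S hS
    exact ⟨R7_card4 S hS, fun a ha b hb => reach_sound ha 3 b (R7_connB S hS a ha b hb)⟩
  · intro S hS T hT hne h
    have hSne : S.Nonempty := Finset.card_pos.mp (by rw [R7_card4 S hS]; norm_num)
    obtain ⟨k, hk, t, ht, s, hs, heq⟩ := equiv_witness hSne h
    exact distinct_check S hS T hT hne k hk t ht s hs heq
  · intro S hcard hconn
    have hne : S.Nonempty := Finset.card_pos.mp (by omega)
    have hXne : (S.image Prod.fst).Nonempty := hne.image _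
    have hYne : (S.image Prod.snd).Nonempty := hne.image _
    set mx := (S.image Prod.fst).min' hXne with hmx
    set my := (S.image Prod.snd).min' hYne with hmy
    obtain ⟨a0, ha0S, ha0⟩ := Finset.mem_image.mp ((S.image Prod.fst).min'_mem hXne)
    obtain ⟨b0, hb0S, hb0⟩ := Finset.mem_image.mp ((S.image Prod.snd).min'_mem hYne)
    set w : ℤ × ℤ := (-mx, -my) with hw
    set N := S.image (· + w) with hN
    have hNcard : N.card = 4 := by
      rw [hN, Finset.card_image_of_injective _ (add_left_injective w)]; exact hcard
    have hNconn : ConnectedConfig N := conn_translate w hconn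
    have hmxle : ∀ p ∈ S, mx ≤ p.1 := fun p hp =>
      Finset.min'_le _ _ (Finset.mem_image_of_mem _ hp)
    have hmyle : ∀ p ∈ S, my ≤ p.2 := fun p hp =>
      Finset.min'_le _ _ (Finset.mem_image_of_mem _ hp)
    have hNbox : N ⊆ box := by
      intro q hq
      obtain ⟨p, hp, rfl⟩ := Finset.mem_image.mp hq
      have h1 := hmxle p hp
      have h2 : p.1 - a0.1 ≤ 3 := span fst_adj hcard hconn ha0S hp
      have h3 := hmyle p hp
      have h4 : p.2 - b0.2 ≤ 3 := span snd_adj hcard hconn hb0S hp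
      refine mem_box ?_ ?_ ?_ ?_ <;>
        simp only [Prod.fst_add, Prod.snd_add, hw] <;> omega
    have hx0 : ∃ p ∈ N, p.1 = 0 :=
      ⟨a0 + w, Finset.mem_image_of_mem _ ha0S, by
        simp only [Prod.fst_add, hw]; omega⟩
    have hy0 : ∃ p ∈ N, p.2 = 0 :=
      ⟨b0 + w, Finset.mem_image_of_mem _ hb0S, by
        simp only [Prod.snd_add, hw]; omega⟩
    have hnb : ∀ p ∈ N, ∃ q ∈ N, SideAdj p q := exists_neighbor (by omega) hNconn
    have hreach : ∀ a ∈ N, ∀ b ∈ N, b ∈ reachN N 3 {a} := by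
      intro a ha b hb
      obtain ⟨n, hn⟩ := rtg_mem_reach (hNconn a ha b hb)
      exact reach_le3 (by omega) ha n hn
    have hN0 : N.Nonempty := Finset.card_pos.mp (by omega)
    obtain ⟨p1, hp1, hmin1⟩ := exists_min_key hN0 hNbox
    have hc1 : (N.erase p1).card = 3 := by rw [Finset.card_erase_of_mem hp1, hNcard]
    obtain ⟨p2, hp2, hmin2⟩ := exists_min_key (A := N.erase p1)
      (Finset.card_pos.mp (by omega)) ((Finset.erase_subset _ _).trans hNbox)
    have hc2 : ((N.erase p1).erase p2).card = 2 := by rw [Finset.card_erase_of_mem hp2, hc1]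
    obtain ⟨p3, hp3, hmin3⟩ := exists_min_key (A := (N.erase p1).erase p2)
      (Finset.card_pos.mp (by omega))
      (((Finset.erase_subset _ _).trans (Finset.erase_subset _ _)).trans hNbox)
    have hc3 : (((N.erase p1).erase p2).erase p3).card = 1 := by
      rw [Finset.card_erase_of_mem hp3, hc2]
    obtain ⟨p4, hp4eq⟩ := Finset.card_eq_one.mp hc3
    have hp4 : p4 ∈ ((N.erase p1).erase p2).erase p3 := by
      rw [hp4eq]; exact Finset.mem_singleton_self _
    have hNeq : N = {p1, p2, p3, p4} := by
      have e2 : (N.erase p1).erase p2 = insert p3 ((((N.erase p1).erase p2)).erase p3) :=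
        (Finset.insert_erase hp3).symm
      have e1 : N.erase p1 = insert p2 ((N.erase p1).erase p2) :=
        (Finset.insert_erase hp2).symm
      have e0 : N = insert p1 (N.erase p1) := (Finset.insert_erase hp1).symm
      rw [e0, e1, e2, hp4eq]
    have hp2N : p2 ∈ N := Finset.erase_subset _ _ hp2
    have hp3N1 : p3 ∈ N.erase p1 := Finset.erase_subset _ _ hp3
    have hp3N : p3 ∈ N := Finset.erase_subset _ _ hp3N1
    have hp4N2 : p4 ∈ (N.erase p1).erase p2 := Finset.erase_subset _ _ hp4
    have hp4N : p4 ∈ N := Finset.erase_subset _ _ (Finset.erase_subset _ _ hp4N2)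
    have b1 : p1 ∈ box := hNbox hp1
    have b2 : p2 ∈ box := hNbox hp2N
    have b3 : p3 ∈ box := hNbox hp3N
    have b4 : p4 ∈ box := hNbox hp4N
    have o12 : key p1 < key p2 := hmin1 p2 hp2N (Finset.mem_erase.mp hp2).1
    have o23 : key p2 < key p3 := hmin2 p3 hp3N1 (Finset.mem_erase.mp hp3).1
    have o34 : key p3 < key p4 := hmin3 p4 hp4N2 (Finset.mem_erase.mp hp4).1
    rw [hNeq] at hx0 hy0 hnb hreach
    obtain ⟨k, hk, hTmem⟩ :=
      complete_check p1 b1 p2 b2 o12 p3 b3 o23 p4 b4 o34 hx0 hy0 hnb hreach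
    rw [← hNeq] at hTmem
    refine ⟨normz (N.image Rot90^[k]), hTmem, ?_⟩
    apply equiv_symm
    refine ⟨k, Rot90^[k] w +
      (-(((N.image Rot90^[k]).image Prod.fst).min.untopD 0),
       -(((N.image Rot90^[k]).image Prod.snd).min.untopD 0)), ?_⟩
    show normz (N.image Rot90^[k]) = _
    rw [normz, hN, Finset.image_image, Finset.image_image]
    apply Finset.image_congr
    intro p _
    show Rot90^[k] (p + w) + _ = _
    rw [rotk_add]
    exact add_assoc _ _ _
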